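/- In a pre-Riesz space X, a linear operator T: D(T) ⊆ X → X is local (x ∈ D(T), y ∈ X, x ⊥ y implies Tx ⊥ y) if and only if T is band preserving (for every band B in X, T(B ∩ D(T)) ⊆ B). -/

import Mathlib

/-- Disjointness in a partially ordered vector space. -/
def PDisj {X : Type*} [AddCommGroup X] [PartialOrder X] (x y : X) : Prop :=
  upperBounds {x + y, -x - y} = upperBounds {x - y, -x + y}

/-- The disjoint complement of a subset `M`. -/
def Dcompl {X : Type*} [AddCommGroup X] [PartialOrder X] (M : Set X) : Set X :=
  {y | ∀ x ∈ M, PDisj y x}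

lemma pdisj_symm {X : Type*} [AddCommGroup X] [PartialOrder X] {x y : X}
    (h : PDisj x y) : PDisj y x := by
  unfold PDisj at *
  have e1 : ({y + x, -y - x} : Set X) = {x + y, -x - y} := by
    rw [show y + x = x + y by abel, show -y - x = -x - y by abel]
  have e2 : ({y - x, -y + x} : Set X) = {x - y, -x + y} := by
    rw [show y - x = -x + y by abel, show -y + x = x - y by abel, Set.pair_comm]
  rw [e1, e2, h]

lemma subset_dd {X : Type*} [AddCommGroup X] [PartialOrder X] (M : Set X) :
    M ⊆ Dcompl (Dcompl M) := fun x hx y hy => pdisj_symm (hy x hx)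

lemma dcompl_antitone {X : Type*} [AddCommGroup X] [PartialOrder X] {M N : Set X}
    (h : M ⊆ N) : Dcompl N ⊆ Dcompl M := fun y hy x hx => hy x (h hx)

lemma ddd_eq {X : Type*} [AddCommGroup X] [PartialOrder X] (M : Set X) :
    Dcompl (Dcompl (Dcompl M)) = Dcompl M :=
  le_antisymm (dcompl_antitone (subset_dd M)) (subset_dd (Dcompl M))

/-- In a pre-Riesz space, a linear operator `T : D(T) ⊆ X → X` is local
(`x ⊥ y ⇒ Tx ⊥ y`) iff it is band preserving (`T(B ∩ D(T)) ⊆ B` for every band `B`). -/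
theorem stmt9 {X : Type*} [AddCommGroup X] [PartialOrder X] [IsOrderedAddMonoid X] [Module ℝ X] [PosSMulStrictMono ℝ X] [PosSMulReflectLT ℝ X]
    (hpr : ∀ x y z : X, upperBounds {x + y, x + z} ⊆ upperBounds {y, z} → 0 ≤ x)
    (D : Submodule ℝ X) (T : D →ₗ[ℝ] X) :
    (∀ (x : D) (y : X), PDisj (x : X) y → PDisj (T x) y) ↔
    (∀ B : Set X, Dcompl (Dcompl B) = B → ∀ x : D, (x : X) ∈ B → T x ∈ B) := by
  constructor
  · intro hloc B hB x hx
    rw [← hB]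
    intro y hy
    exact hloc x y (pdisj_symm (hy (x : X) hx))
  · intro hbp x y hxy
    have hband := ddd_eq ({y} : Set X)
    have hxB : (x : X) ∈ Dcompl ({y} : Set X) := by
      intro m hm
      rcases hm with rfl
      exact hxy
    exact hbp _ hband x hxB y rfl
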